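/- Let F : ℝ^d → ℝ^r be differentiable such that F is Lipschitz with constant L_F and its Jacobian F′ is Lipschitz with constant L′_F (in operator norm). Let C be an r×r real symmetric positive definite matrix, f̄ ∈ ℝ^r, ᾱ ≥ 0, and define Q_F(s) = −ᾱ log(1 + D_F(s)) with D_F(s) = (f̄ − F(s))ᵀC⁻¹(f̄ − F(s)). Then ∇Q_F is Lipschitz continuous: for all s, s̃ ∈ ℝ^d, ‖∇Q_F(s) − ∇Q_F(s̃)‖ ≤ 2ᾱ(L′_F C_φ(C⁻¹) + L_F² L_φ(C⁻¹))·‖s − s̃‖, where C_φ(V) = √‖V‖/2 and L_φ(V) = ‖V‖(1 + μ(V)/2) with μ(V) = ‖V‖·‖V⁻¹‖. -/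

import Mathlib

open scoped RealInnerProductSpace

set_option maxHeartbeats 1000000
set_option synthInstance.maxHeartbeats 400000

section AuxLemmas

variable {E : Type*} [NormedAddCommGroup E] [InnerProductSpace ℝ E]

private lemma QF_aux_cs (A : E →L[ℝ] E) (hsym : ∀ x y : E, ⟪A x, y⟫ = ⟪x, A y⟫)
    (hpos : ∀ x : E, 0 ≤ ⟪x, A x⟫) (x y : E) :
    ⟪x, A y⟫ ^ 2 ≤ ⟪x, A x⟫ * ⟪y, A y⟫ := by
  have hyx : ⟪y, A x⟫ = ⟪x, A y⟫ := by rw [← hsym, real_inner_comm]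
  have key : ∀ t : ℝ, 0 ≤ ⟪y, A y⟫ * (t * t) + (2 * ⟪x, A y⟫) * t + ⟪x, A x⟫ := by
    intro t
    have h0 := hpos (x + t • y)
    have expand : ⟪x + t • y, A (x + t • y)⟫
        = ⟪y, A y⟫ * (t * t) + (2 * ⟪x, A y⟫) * t + ⟪x, A x⟫ := by
      simp only [map_add, map_smul, inner_add_left, inner_add_right,
        real_inner_smul_left, real_inner_smul_right, hyx]
      ring
    linarith [expand ▸ h0]
  have hd := discrim_le_zero (a := ⟪y, A y⟫) (b := 2 * ⟪x, A y⟫) (c := ⟪x, A x⟫) key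
  rw [discrim] at hd
  nlinarith [hd]

private lemma QF_aux_normsq (A : E →L[ℝ] E) (hsym : ∀ x y : E, ⟪A x, y⟫ = ⟪x, A y⟫)
    (hpos : ∀ x : E, 0 ≤ ⟪x, A x⟫) (x : E) :
    ‖A x‖ ^ 2 ≤ ‖A‖ * ⟪x, A x⟫ := by
  have h1 : ⟪x, A (A x)⟫ = ‖A x‖ ^ 2 := by
    rw [← hsym, real_inner_self_eq_norm_sq]
  have h2 := QF_aux_cs A hsym hpos x (A x)
  have h3 : ⟪A x, A (A x)⟫ ≤ ‖A x‖ * (‖A‖ * ‖A x‖) := by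
    refine le_trans (real_inner_le_norm _ _) ?_
    gcongr
    exact A.le_opNorm _
  rcases eq_or_lt_of_le (norm_nonneg (A x)) with h0 | h0
  · rw [← h0]
    simpa using mul_nonneg (norm_nonneg A) (hpos x)
  · nlinarith [mul_le_mul_of_nonneg_left h3 (hpos x), h2, h1, mul_pos h0 h0]

private lemma QF_aux_Cphi (A : E →L[ℝ] E) (hsym : ∀ x y : E, ⟪A x, y⟫ = ⟪x, A y⟫)
    (hpos : ∀ x : E, 0 ≤ ⟪x, A x⟫) (x : E) :
    (1 + ⟪x, A x⟫)⁻¹ * ‖A x‖ ≤ Real.sqrt ‖A‖ / 2 := by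
  have ha0 : 0 ≤ ⟪x, A x⟫ := hpos x
  set a := ⟪x, A x⟫ with ha
  have h1a : (0:ℝ) < 1 + a := by linarith
  have hAx : ‖A x‖ ≤ Real.sqrt ‖A‖ * Real.sqrt a := by
    rw [← Real.sqrt_mul (norm_nonneg A)]
    exact Real.le_sqrt_of_sq_le (QF_aux_normsq A hsym hpos x)
  have hu : 0 ≤ Real.sqrt a := Real.sqrt_nonneg a
  have hu2 : Real.sqrt a ^ 2 = a := Real.sq_sqrt ha0
  have hs : Real.sqrt a * (1 + a)⁻¹ ≤ 1 / 2 := by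
    rw [← div_eq_mul_inv, div_le_div_iff₀ h1a (by norm_num)]
    nlinarith [sq_nonneg (Real.sqrt a - 1)]
  calc (1 + a)⁻¹ * ‖A x‖ ≤ (1 + a)⁻¹ * (Real.sqrt ‖A‖ * Real.sqrt a) := by gcongr
    _ = Real.sqrt ‖A‖ * (Real.sqrt a * (1 + a)⁻¹) := by ring
    _ ≤ Real.sqrt ‖A‖ * (1 / 2) := by gcongr
    _ = Real.sqrt ‖A‖ / 2 := by ring

private lemma QF_aux_core (A : E →L[ℝ] E) (hsym : ∀ x y : E, ⟪A x, y⟫ = ⟪x, A y⟫)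
    (hpos : ∀ x : E, 0 ≤ ⟪x, A x⟫) (x y : E) :
    ‖(1 + ⟪x, A x⟫)⁻¹ • A x - (1 + ⟪y, A y⟫)⁻¹ • A y‖ ≤ 3 / 2 * (‖A‖ * ‖x - y‖) := by
  have ha0 : 0 ≤ ⟪x, A x⟫ := hpos x
  have hb0 : 0 ≤ ⟪y, A y⟫ := hpos y
  set a := ⟪x, A x⟫ with hadef
  set b := ⟪y, A y⟫ with hbdef
  have h1a : (0:ℝ) < 1 + a := by linarith
  have h1b : (0:ℝ) < 1 + b := by linarith
  set cs := (1 + a)⁻¹ with hcs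
  set ct := (1 + b)⁻¹ with hct
  have hcs0 : 0 < cs := inv_pos.mpr h1a
  have hct0 : 0 < ct := inv_pos.mpr h1b
  have hxy : ⟪x, A y⟫ = ⟪y, A x⟫ := by rw [← hsym, real_inner_comm]
  have hba : b - a = ⟪y - x, A (x + y)⟫ := by
    simp only [inner_sub_left, map_add, inner_add_right, hxy, hbdef, hadef]
    ring_nf
  have hid : cs • A x - ct • A y
      = ((cs + ct) / 2) • A (x - y) + ((cs - ct) / 2) • A (x + y) := by
    rw [map_sub, map_add]
    module
  have hpar : ⟪x + y, A (x + y)⟫ ≤ 2 * a + 2 * b := by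
    have h0 := hpos (x - y)
    simp only [map_add, map_sub, inner_add_left, inner_add_right, inner_sub_left,
      inner_sub_right, hxy, hadef, hbdef] at h0 ⊢
    linarith
  have hq : ‖A (x + y)‖ ^ 2 ≤ ‖A‖ * (2 * a + 2 * b) := by
    refine (QF_aux_normsq A hsym hpos (x + y)).trans ?_
    exact mul_le_mul_of_nonneg_left hpar (norm_nonneg A)
  have hdiffc : cs - ct = (b - a) * (cs * ct) := by
    rw [hcs, hct]
    field_simp
    ring
  have hCS : |b - a| ≤ ‖x - y‖ * ‖A (x + y)‖ := by
    rw [hba]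
    calc |⟪y - x, A (x + y)⟫| ≤ ‖y - x‖ * ‖A (x + y)‖ := abs_real_inner_le_norm _ _
    _ = ‖x - y‖ * ‖A (x + y)‖ := by rw [norm_sub_rev]
  have hkey : (cs + ct) / 2 + cs * ct / 2 * (2 * a + 2 * b) ≤ 3 / 2 := by
    rw [hcs, hct]
    field_simp
    nlinarith [mul_nonneg ha0 hb0]
  calc ‖cs • A x - ct • A y‖
      ≤ ‖((cs + ct) / 2) • A (x - y)‖ + ‖((cs - ct) / 2) • A (x + y)‖ := by
        rw [hid]; exact norm_add_le _ _
    _ = (cs + ct) / 2 * ‖A (x - y)‖ + |cs - ct| / 2 * ‖A (x + y)‖ := by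
        rw [norm_smul, norm_smul, Real.norm_eq_abs, Real.norm_eq_abs,
          abs_of_pos (by positivity), abs_div, abs_of_pos (by norm_num : (0:ℝ) < 2)]
    _ ≤ (cs + ct) / 2 * (‖A‖ * ‖x - y‖) + (|b - a| * (cs * ct)) / 2 * ‖A (x + y)‖ := by
        gcongr
        · exact A.le_opNorm _
        · exact le_of_eq (by rw [hdiffc, abs_mul, abs_of_pos (mul_pos hcs0 hct0)])
    _ ≤ (cs + ct) / 2 * (‖A‖ * ‖x - y‖)
        + (‖x - y‖ * ‖A (x + y)‖ * (cs * ct)) / 2 * ‖A (x + y)‖ := by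
        gcongr
    _ = (cs + ct) / 2 * (‖A‖ * ‖x - y‖) + cs * ct / 2 * ‖A (x + y)‖ ^ 2 * ‖x - y‖ := by ring
    _ ≤ (cs + ct) / 2 * (‖A‖ * ‖x - y‖) + cs * ct / 2 * (‖A‖ * (2 * a + 2 * b)) * ‖x - y‖ := by
        gcongr
    _ = ((cs + ct) / 2 + cs * ct / 2 * (2 * a + 2 * b)) * (‖A‖ * ‖x - y‖) := by ring
    _ ≤ 3 / 2 * (‖A‖ * ‖x - y‖) :=
        mul_le_mul_of_nonneg_right hkey (by positivity)

end AuxLemmas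

private lemma QF_grad_comp {d r : ℕ}
    (F : EuclideanSpace ℝ (Fin d) → EuclideanSpace ℝ (Fin r))
    (hF : Differentiable ℝ F) (A : EuclideanSpace ℝ (Fin r) →L[ℝ] EuclideanSpace ℝ (Fin r))
    (hsym : ∀ x y, ⟪A x, y⟫ = ⟪x, A y⟫) (hpos : ∀ x, 0 ≤ ⟪x, A x⟫)
    (fbar : EuclideanSpace ℝ (Fin r)) (αbar : ℝ)
    (s : EuclideanSpace ℝ (Fin d)) :
    HasGradientAt (fun x => -αbar * Real.log (1 + ⟪fbar - F x, A (fbar - F x)⟫))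
      ((2 * αbar * (1 + ⟪fbar - F s, A (fbar - F s)⟫)⁻¹) •
        (ContinuousLinearMap.adjoint (fderiv ℝ F s)) (A (fbar - F s))) s := by
  set g : EuclideanSpace ℝ (Fin d) → EuclideanSpace ℝ (Fin r) := fun x => fbar - F x with hg
  set P := fderiv ℝ F s with hP
  have hgs : HasFDerivAt g (-P) s := (hF s).hasFDerivAt.const_sub fbar
  have hAg : HasFDerivAt (fun x => A (g x)) (A.comp (-P)) s := A.hasFDerivAt.comp s hgs
  have hDf : HasFDerivAt (fun x => ⟪g x, A (g x)⟫)
      ((fderivInnerCLM ℝ (g s, A (g s))).comp ((-P).prod (A.comp (-P)))) s := hgs.inner ℝ hAg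
  have hDs : (0:ℝ) < 1 + ⟪g s, A (g s)⟫ := by linarith [hpos (g s)]
  have hQf : HasFDerivAt (fun x => -αbar * Real.log (1 + ⟪g x, A (g x)⟫))
      ((-αbar) • ((1 + ⟪g s, A (g s)⟫)⁻¹ •
        ((fderivInnerCLM ℝ (g s, A (g s))).comp ((-P).prod (A.comp (-P)))))) s :=
    ((hDf.const_add 1).log hDs.ne').const_mul (-αbar)
  rw [hasGradientAt_iff_hasFDerivAt]
  refine hQf.congr_fderiv (Eq.symm ?_)
  ext v
  simp only [InnerProductSpace.toDual_apply_apply, ContinuousLinearMap.smul_apply,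
    ContinuousLinearMap.coe_comp', Function.comp_apply, ContinuousLinearMap.prod_apply,
    ContinuousLinearMap.neg_apply, fderivInnerCLM_apply, smul_eq_mul, map_neg,
    real_inner_smul_left, inner_neg_neg, inner_neg_left, inner_neg_right]
  rw [ContinuousLinearMap.adjoint_inner_left]
  have h1 : ⟪g s, A (P v)⟫ = ⟪A (g s), P v⟫ := (hsym (g s) (P v)).symm
  have h2 : ⟪P v, A (g s)⟫ = ⟪A (g s), P v⟫ := real_inner_comm _ _
  rw [h1, h2]
  ring

/-- Let `F : ℝ^d → ℝ^r` be differentiable, Lipschitz with constant `L_F`,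
with Jacobian `F′` Lipschitz (in operator norm) with constant `L′_F`.  Let `C` be
symmetric positive definite, `f̄ ∈ ℝ^r`, `ᾱ ≥ 0`, and
`Q_F(s) = −ᾱ log(1 + D_F(s))` with `D_F(s) = (f̄ − F(s))ᵀ C⁻¹ (f̄ − F(s))`.  Then `∇Q_F`
is Lipschitz with constant `2ᾱ (L′_F C_φ(C⁻¹) + L_F² L_φ(C⁻¹))`, where
`C_φ(V) = √‖V‖/2` and `L_φ(V) = ‖V‖ (1 + μ(V)/2)`, `μ(V) = ‖V‖ ⬝ ‖V⁻¹‖`. -/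
theorem QF_gradient_lipschitz {d r : ℕ}
    (F : EuclideanSpace ℝ (Fin d) → EuclideanSpace ℝ (Fin r))
    (hF : Differentiable ℝ F) (L_F L'_F : ℝ)
    (hFlip : ∀ s t, ‖F s - F t‖ ≤ L_F * ‖s - t‖)
    (hF'lip : ∀ s t, ‖fderiv ℝ F s - fderiv ℝ F t‖ ≤ L'_F * ‖s - t‖)
    (C : Matrix (Fin r) (Fin r) ℝ) (hC : C.PosDef)
    (fbar : EuclideanSpace ℝ (Fin r)) (αbar : ℝ) (hα : 0 ≤ αbar)
    (D_F Q_F : EuclideanSpace ℝ (Fin d) → ℝ)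
    (hD : D_F = fun s => ⟪fbar - F s, (Matrix.toEuclideanCLM (𝕜 := ℝ) C⁻¹) (fbar - F s)⟫)
    (hQ : Q_F = fun s => -αbar * Real.log (1 + D_F s)) :
    ∀ s t, ‖gradient Q_F s - gradient Q_F t‖ ≤
      2 * αbar *
          (L'_F * (Real.sqrt ‖Matrix.toEuclideanCLM (𝕜 := ℝ) C⁻¹‖ / 2) +
            L_F ^ 2 * (‖Matrix.toEuclideanCLM (𝕜 := ℝ) C⁻¹‖ *
              (1 + (‖Matrix.toEuclideanCLM (𝕜 := ℝ) C⁻¹‖ *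
                ‖Matrix.toEuclideanCLM (𝕜 := ℝ) C‖) / 2))) * ‖s - t‖ := by
  intro s t
  set A := Matrix.toEuclideanCLM (𝕜 := ℝ) C⁻¹ with hA
  set B := Matrix.toEuclideanCLM (𝕜 := ℝ) C with hB
  -- basic properties of A
  have hsym : ∀ x y, ⟪A x, y⟫ = ⟪x, A y⟫ := fun x y =>
    (Matrix.isHermitian_iff_isSymmetric.mp hC.inv.1) x y
  have hpos : ∀ x, 0 ≤ ⟪x, A x⟫ := by
    intro x
    have h := (hC.inv.posSemidef).dotProduct_mulVec_nonneg (x : Fin r → ℝ)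
    simpa [hA, Matrix.inner_toEuclideanCLM] using h
  clear_value A B
  -- the case s = t
  rcases eq_or_ne s t with rfl | hst
  · simp only [sub_self, norm_zero, mul_zero, le_refl]
  have hstn : 0 < ‖s - t‖ := by
    rw [norm_pos_iff]
    exact sub_ne_zero.mpr hst
  have hL_F : 0 ≤ L_F := by
    by_contra h
    push_neg at h
    nlinarith [hFlip s t, norm_nonneg (F s - F t), mul_neg_of_neg_of_pos h hstn]
  -- gradient formula
  have hQ' : Q_F = fun x => -αbar * Real.log (1 + ⟪fbar - F x, A (fbar - F x)⟫) := by
    funext x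
    simp only [hQ, hD]
  have hgrad : ∀ u, gradient Q_F u =
      (2 * αbar * (1 + ⟪fbar - F u, A (fbar - F u)⟫)⁻¹) •
        (ContinuousLinearMap.adjoint (fderiv ℝ F u)) (A (fbar - F u)) := by
    intro u
    rw [hQ']
    exact (QF_grad_comp F hF A hsym hpos fbar αbar u).gradient
  -- notation
  set gs := fbar - F s with hgs
  set gt := fbar - F t with hgt
  set cs := (1 + ⟪gs, A gs⟫)⁻¹ with hcs
  set ct := (1 + ⟪gt, A gt⟫)⁻¹ with hct
  set Ps := fderiv ℝ F s with hPs
  set Pt := fderiv ℝ F t with hPt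
  set Qs := ContinuousLinearMap.adjoint Ps with hQs
  set Qt := ContinuousLinearMap.adjoint Pt with hQt
  clear_value gs gt cs ct Ps Pt Qs Qt
  have hcs0 : 0 < cs := by
    rw [hcs]
    have := hpos gs
    positivity
  -- Lipschitz bound on the derivative
  have hlipF : LipschitzWith ⟨L_F, hL_F⟩ F := by
    refine LipschitzWith.of_dist_le_mul fun x y => ?_
    rw [dist_eq_norm, dist_eq_norm]
    exact hFlip x y
  have hPtle : ‖Pt‖ ≤ L_F := by
    rw [hPt]
    exact_mod_cast norm_fderiv_le_of_lipschitz ℝ hlipF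
  -- difference splitting
  have hsplit : cs • Qs (A gs) - ct • Qt (A gt)
      = (Qs - Qt) (cs • A gs) + Qt (cs • A gs - ct • A gt) := by
    simp only [ContinuousLinearMap.sub_apply, map_smul, map_sub]
    module
  have hadj_norm : ‖Qs - Qt‖ = ‖Ps - Pt‖ := by
    rw [hQs, hQt, ← map_sub]
    exact LinearIsometryEquiv.norm_map _ _
  have hQt_norm : ‖Qt‖ = ‖Pt‖ := by
    rw [hQt]
    exact LinearIsometryEquiv.norm_map _ _
  have hgst : ‖gs - gt‖ ≤ L_F * ‖s - t‖ := by
    have : gs - gt = F t - F s := by rw [hgs, hgt]; abel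
    rw [this, norm_sub_rev]
    exact hFlip s t
  have hPsPt : ‖Ps - Pt‖ ≤ L'_F * ‖s - t‖ := by
    rw [hPs, hPt]
    exact hF'lip s t
  have hCphi : cs * ‖A gs‖ ≤ Real.sqrt ‖A‖ / 2 := by
    rw [hcs]
    exact QF_aux_Cphi A hsym hpos gs
  have hterm1 : ‖(Qs - Qt) (cs • A gs)‖ ≤ L'_F * ‖s - t‖ * (Real.sqrt ‖A‖ / 2) := by
    calc ‖(Qs - Qt) (cs • A gs)‖ ≤ ‖Qs - Qt‖ * ‖cs • A gs‖ :=
          (Qs - Qt).le_opNorm _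
      _ = ‖Ps - Pt‖ * (cs * ‖A gs‖) := by
          rw [hadj_norm, norm_smul, Real.norm_eq_abs, abs_of_pos hcs0]
      _ ≤ (L'_F * ‖s - t‖) * (Real.sqrt ‖A‖ / 2) := by
          refine mul_le_mul hPsPt hCphi ?_ ?_
          · exact mul_nonneg hcs0.le (norm_nonneg _)
          · exact le_trans (norm_nonneg _) hPsPt
  have hterm2 : ‖Qt (cs • A gs - ct • A gt)‖ ≤ L_F * (3 / 2 * (‖A‖ * (L_F * ‖s - t‖))) := by
    calc ‖Qt (cs • A gs - ct • A gt)‖ ≤ ‖Qt‖ * ‖cs • A gs - ct • A gt‖ := Qt.le_opNorm _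
      _ ≤ L_F * (3 / 2 * (‖A‖ * ‖gs - gt‖)) := by
          have hcore : ‖cs • A gs - ct • A gt‖ ≤ 3 / 2 * (‖A‖ * ‖gs - gt‖) := by
            rw [hcs, hct]
            exact QF_aux_core A hsym hpos gs gt
          exact mul_le_mul (hQt_norm ▸ hPtle) hcore (norm_nonneg _) hL_F
      _ ≤ L_F * (3 / 2 * (‖A‖ * (L_F * ‖s - t‖))) := by gcongr
  -- condition number bound
  have h32 : 3 / 2 * ‖A‖ ≤ ‖A‖ * (1 + ‖A‖ * ‖B‖ / 2) := by
    rcases eq_or_lt_of_le (norm_nonneg A) with hA0 | hA0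
    · rw [← hA0]; norm_num
    · have hANe : A ≠ 0 := by
        intro h
        rw [h, norm_zero] at hA0
        exact lt_irrefl _ hA0
      obtain ⟨x, hx⟩ : ∃ x, A x ≠ 0 := by
        by_contra h
        push_neg at h
        exact hANe (ContinuousLinearMap.ext fun x => by rw [h x, ContinuousLinearMap.zero_apply])
      have hxne : x ≠ 0 := fun h => hx (by rw [h, map_zero])
      have hxpos : 0 < ‖x‖ := norm_pos_iff.mpr hxne
      have hABid : A (B x) = x := by
        have hmul : A * B = 1 := by
          rw [hA, hB, ← map_mul, Matrix.nonsing_inv_mul C (isUnit_iff_ne_zero.mpr hC.det_pos.ne'),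
            map_one]
        rw [← ContinuousLinearMap.mul_apply, hmul, ContinuousLinearMap.one_apply]
      have hmu : 1 ≤ ‖A‖ * ‖B‖ := by
        have h1 : ‖x‖ ≤ ‖A‖ * ‖B‖ * ‖x‖ := by
          calc ‖x‖ = ‖A (B x)‖ := by rw [hABid]
            _ ≤ ‖A‖ * ‖B x‖ := A.le_opNorm _
            _ ≤ ‖A‖ * (‖B‖ * ‖x‖) := by
                gcongr
                exact B.le_opNorm _
            _ = ‖A‖ * ‖B‖ * ‖x‖ := by ring
        by_contra hcon
        push_neg at hcon
        nlinarith [h1, mul_lt_mul_of_pos_right hcon hxpos]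
      have h2 := mul_le_mul_of_nonneg_left hmu (le_of_lt hA0)
      linarith [h2]
  -- final computation
  have e1 : ‖gradient Q_F s - gradient Q_F t‖
      = 2 * αbar * ‖cs • Qs (A gs) - ct • Qt (A gt)‖ := by
    have hfin : ‖gradient Q_F s - gradient Q_F t‖
        = ‖(2 * αbar) • (cs • Qs (A gs) - ct • Qt (A gt))‖ := by
      rw [hgrad s, hgrad t, hcs, hct, hQs, hQt, hgs, hgt, hPs, hPt]
      congr 1
      module
    rw [hfin, norm_smul, Real.norm_eq_abs, abs_of_nonneg (by linarith : (0:ℝ) ≤ 2 * αbar)]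
  have e2 : ‖cs • Qs (A gs) - ct • Qt (A gt)‖
      ≤ L'_F * ‖s - t‖ * (Real.sqrt ‖A‖ / 2) + L_F * (3 / 2 * (‖A‖ * (L_F * ‖s - t‖))) := by
    rw [hsplit]
    exact (norm_add_le _ _).trans (add_le_add hterm1 hterm2)
  have h2' := mul_le_mul_of_nonneg_right h32
    (mul_nonneg (sq_nonneg L_F) (norm_nonneg (s - t)))
  have e3 : L'_F * ‖s - t‖ * (Real.sqrt ‖A‖ / 2) + L_F * (3 / 2 * (‖A‖ * (L_F * ‖s - t‖)))
      ≤ (L'_F * (Real.sqrt ‖A‖ / 2)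
          + L_F ^ 2 * (‖A‖ * (1 + ‖A‖ * ‖B‖ / 2))) * ‖s - t‖ := by
    linarith [h2']
  rw [e1]
  refine le_trans (mul_le_mul_of_nonneg_left (e2.trans e3)
    (by linarith : (0:ℝ) ≤ 2 * αbar)) (le_of_eq (by ring))
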